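/- arXiv:0907.2587 — 4 statements merged into one kernel-verified Lean document; each statement's English description precedes it below -/
import Mathlib

section
/- Let (F_l)_{l ∈ -ℕ} be a decreasing sequence of sub-σ-fields (F_0 ⊇ F_{-1} ⊇ …) and let G be a sub-σ-field. If F_0 is independent of G, then ⋂_{l} (F_l ∨ G) = (⋂_{l} F_l) ∨ G (up to null sets). -/
open MeasureTheory ProbabilityTheory

/-- Equality of two sub-σ-fields modulo `μ`-null sets: every set measurable for one
differs from some set measurable for the other by a `μ`-null set. -/
def EqModNull {Ω : Type*} {m : MeasurableSpace Ω} (μ : Measure Ω)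
    (m₁ m₂ : MeasurableSpace Ω) : Prop :=
  (∀ s, MeasurableSet[m₁] s → ∃ t, MeasurableSet[m₂] t ∧ μ (symmDiff s t) = 0) ∧
  (∀ s, MeasurableSet[m₂] s → ∃ t, MeasurableSet[m₁] t ∧ μ (symmDiff s t) = 0)

section Aux

open Filter Set

noncomputable section
namespace EqModNullAux

variable {Ω : Type*} {m : MeasurableSpace Ω} {μ : Measure Ω}

/-- a.e. strong measurability w.r.t. each σ-algebra of an antitone family passes to the
infimum, via an `EReal`-valued `limsup` of chosen representatives. -/
lemma aestronglyMeasurable'_iInf {F : ℕ → MeasurableSpace Ω} (hdec : Antitone F)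
    {y : Ω → ℝ} (hy : ∀ l, AEStronglyMeasurable[F l] y μ) :
    AEStronglyMeasurable[⨅ l, F l] y μ := by
  choose g hgm hgy using hy
  set h : Ω → ℝ := fun ω => (limsup (fun l => ((g l ω : ℝ) : EReal)) atTop).toReal with hh
  have hmeas : ∀ k, Measurable[F k] h := by
    intro k
    have hrw : h = fun ω => (limsup (fun l => ((g (l + k) ω : ℝ) : EReal)) atTop).toReal := by
      funext ω
      rw [hh]
      rw [Filter.limsup_nat_add (fun l => ((g l ω : ℝ) : EReal)) k]
    rw [hrw]
    have hls : Measurable[F k] fun ω => limsup (fun l => ((g (l + k) ω : ℝ) : EReal)) atTop := by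
      refine Measurable.limsup (mδ := F k) (f := fun l ω => ((g (l + k) ω : ℝ) : EReal)) ?_
      intro l
      exact measurable_coe_real_ereal.comp
        (((hgm (l + k)).measurable).mono (hdec (Nat.le_add_left k l)) le_rfl)
    exact measurable_ereal_toReal.comp hls
  refine ⟨h, ?_, ?_⟩
  · refine Measurable.stronglyMeasurable ?_
    intro t ht
    exact MeasurableSpace.measurableSet_iInf.2 fun k => hmeas k ht
  · filter_upwards [ae_all_iff.2 hgy] with ω hω
    have : (fun l => ((g l ω : ℝ) : EReal)) = fun _ => ((y ω : ℝ) : EReal) := by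
      funext l; rw [← hω l]
    rw [hh]
    simp only [this, Filter.limsup_const, EReal.toReal_coe]

/-- The collection of "rectangles" `B ∩ C`. -/
def rects (m₁ m₂ : MeasurableSpace Ω) : Set (Set Ω) :=
  {s | ∃ B C, MeasurableSet[m₁] B ∧ MeasurableSet[m₂] C ∧ s = B ∩ C}

lemma isPiSystem_rects (m₁ m₂ : MeasurableSpace Ω) : IsPiSystem (rects m₁ m₂) := by
  rintro s ⟨B, C, hB, hC, rfl⟩ t ⟨B', C', hB', hC', rfl⟩ -
  exact ⟨B ∩ B', C ∩ C', hB.inter hB', hC.inter hC', by ext x; simp; tauto⟩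

lemma sup_eq_generateFrom_rects (m₁ m₂ : MeasurableSpace Ω) :
    m₁ ⊔ m₂ = MeasurableSpace.generateFrom (rects m₁ m₂) := by
  refine le_antisymm (sup_le ?_ ?_) (MeasurableSpace.generateFrom_le ?_)
  · intro s hs
    exact MeasurableSpace.measurableSet_generateFrom
      ⟨s, univ, hs, MeasurableSet.univ, (inter_univ s).symm⟩
  · intro s hs
    exact MeasurableSpace.measurableSet_generateFrom
      ⟨univ, s, MeasurableSet.univ, hs, (univ_inter s).symm⟩
  · rintro s ⟨B, C, hB, hC, rfl⟩
    exact MeasurableSet.inter ((le_sup_left : m₁ ≤ m₁ ⊔ m₂) B hB)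
      ((le_sup_right : m₂ ≤ m₁ ⊔ m₂) C hC)

/-- Zero set-integrals on rectangles extend to the generated σ-algebra `m₁ ⊔ m₂`. -/
lemma setIntegral_eq_zero_of_rects {Ω : Type*} {m₁ m₂ : MeasurableSpace Ω}
    {m : MeasurableSpace Ω} {μ : Measure Ω} (hle : m₁ ⊔ m₂ ≤ m)
    {g : Ω → ℝ} (hg : Integrable g μ)
    (h0 : ∀ B C, MeasurableSet[m₁] B → MeasurableSet[m₂] C → ∫ x in B ∩ C, g x ∂μ = 0) :
    ∀ s, MeasurableSet[m₁ ⊔ m₂] s → ∫ x in s, g x ∂μ = 0 := by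
  have huniv : ∫ x, g x ∂μ = 0 := by
    have := h0 univ univ MeasurableSet.univ MeasurableSet.univ
    simpa using this
  intro s hs
  refine MeasurableSpace.induction_on_inter (m := m₁ ⊔ m₂)
    (C := fun t _ => ∫ x in t, g x ∂μ = 0) (s := rects m₁ m₂)
    (sup_eq_generateFrom_rects m₁ m₂) (isPiSystem_rects m₁ m₂) (by simp) ?_ ?_ ?_ s hs
  · rintro t ⟨B, C, hB, hC, rfl⟩
    exact h0 B C hB hC
  · intro t ht h
    have htm : MeasurableSet t := hle t ht
    have := integral_add_compl htm hg
    rw [h] at this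
    linarith
  · intro f hdisj hmeasf hf
    rw [integral_iUnion (fun i => hle _ (hmeasf i)) hdisj hg.integrableOn]
    simp [hf]

/-- Independence as a set-integral identity. -/
lemma setIntegral_eq_smul_of_indep {Ω : Type*} {m₁ m₂ : MeasurableSpace Ω}
    {m : MeasurableSpace Ω} {μ : Measure Ω} [IsProbabilityMeasure μ]
    (hm₁ : m₁ ≤ m) (hm₂ : m₂ ≤ m) (hindep : Indep m₁ m₂ μ)
    {X : Ω → ℝ} (hX : AEStronglyMeasurable[m₁] X μ) (hXi : Integrable X μ)
    {C : Set Ω} (hC : MeasurableSet[m₂] C) :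
    ∫ x in C, X x ∂μ = (μ C).toReal • ∫ x, X x ∂μ := by
  obtain ⟨X₀, hX₀m, hXX₀⟩ := hX
  have hX₀i : Integrable X₀ μ := hXi.congr hXX₀
  have hce : μ[X₀|m₂] =ᵐ[μ] fun _ => ∫ x, X₀ x ∂μ := condExp_indep_eq hm₁ hm₂ hX₀m hindep
  calc ∫ x in C, X x ∂μ = ∫ x in C, X₀ x ∂μ := integral_congr_ae (ae_restrict_of_ae hXX₀)
    _ = ∫ x in C, (μ[X₀|m₂]) x ∂μ := (setIntegral_condExp hm₂ hX₀i hC).symm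
    _ = ∫ x in C, (fun _ => ∫ x, X₀ x ∂μ) x ∂μ := integral_congr_ae (ae_restrict_of_ae hce)
    _ = (μ C).toReal • ∫ x, X₀ x ∂μ := by rw [setIntegral_const]; rfl
    _ = (μ C).toReal • ∫ x, X x ∂μ := by rw [integral_congr_ae hXX₀]

lemma lpMeas_mono {Ω : Type*} {m₁ m₂ : MeasurableSpace Ω}
    {m : MeasurableSpace Ω} {μ : Measure Ω} (h : m₁ ≤ m₂) :
    lpMeas ℝ ℝ m₁ 2 μ ≤ lpMeas ℝ ℝ m₂ 2 μ := fun _ hu =>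
  mem_lpMeas_iff_aestronglyMeasurable.2 ((mem_lpMeas_iff_aestronglyMeasurable.1 hu).mono h)

local notation "⟪" x ", " y "⟫" => @inner ℝ _ _ x y

/-- Strong convergence of orthogonal projections onto an antitone family of complete
subspaces: the limit lies in every subspace and the residual is orthogonal to the
intersection. -/
lemma proj_tendsto {E : Type*} [NormedAddCommGroup E] [InnerProductSpace ℝ E] [CompleteSpace E]
    (U : ℕ → Submodule ℝ E) [∀ l, CompleteSpace (U l)] (hU : Antitone U) (x : E) :
    ∃ y : E, Tendsto (fun l => (Submodule.orthogonalProjection (U l) x : E)) atTop (nhds y) ∧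
      (∀ k, y ∈ U k) ∧ ∀ w, (∀ l, w ∈ U l) → ⟪x - y, w⟫ = 0 := by
  set P : ℕ → E := fun l => (Submodule.orthogonalProjection (U l) x : E) with hP
  have horth : ∀ {k l : ℕ}, k ≤ l → P k - P l ∈ (U l)ᗮ := by
    intro k l hkl
    have h1 : (Submodule.orthogonalProjection (U l) (P k) : E) = P l := by
      rw [hP]
      simp only []
      exact congrArg Subtype.val (Submodule.orthogonalProjectionOnto_starProjection_of_le (hU hkl) x)
    have h2 : P k - (Submodule.orthogonalProjection (U l) (P k) : E) ∈ (U l)ᗮ :=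
      Submodule.sub_starProjection_mem_orthogonal (K := U l) (P k)
    rwa [h1] at h2
  have hpyth : ∀ {k l : ℕ}, k ≤ l → ‖P k‖ ^ 2 = ‖P k - P l‖ ^ 2 + ‖P l‖ ^ 2 := by
    intro k l hkl
    have h0 : ⟪P k - P l, P l⟫ = 0 :=
      (Submodule.mem_orthogonal' _ _).1 (horth hkl) _ (SetLike.coe_mem _)
    calc ‖P k‖ ^ 2 = ‖(P k - P l) + P l‖ ^ 2 := by rw [sub_add_cancel]
      _ = ‖P k - P l‖ ^ 2 + 2 * ⟪P k - P l, P l⟫ + ‖P l‖ ^ 2 := norm_add_sq_real _ _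
      _ = ‖P k - P l‖ ^ 2 + ‖P l‖ ^ 2 := by rw [h0]; ring
  set a : ℕ → ℝ := fun l => ‖P l‖ ^ 2 with ha
  have ha_anti : Antitone a := by
    intro k l hkl
    have h2 : a k = ‖P k - P l‖ ^ 2 + a l := hpyth hkl
    nlinarith [sq_nonneg ‖P k - P l‖]
  have ha_bdd : BddBelow (Set.range a) := by
    refine ⟨0, ?_⟩
    rintro _ ⟨l, rfl⟩
    positivity
  have ha_tend : Tendsto a atTop (nhds (⨅ l, a l)) := tendsto_atTop_ciInf ha_anti ha_bdd
  have ha_cauchy : CauchySeq a := ha_tend.cauchySeq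
  have hcauchy : CauchySeq P := by
    rw [Metric.cauchySeq_iff]
    intro ε hε
    obtain ⟨N, hN⟩ := Metric.cauchySeq_iff.1 ha_cauchy (ε ^ 2) (by positivity)
    refine ⟨N, fun k hk l hl => ?_⟩
    have key : ∀ k' l' : ℕ, k' ≤ l' → N ≤ k' → N ≤ l' → dist (P k') (P l') < ε := by
      intro k' l' hkl hk' hl'
      have hd := hN k' hk' l' hl'
      have h1 : dist (P k') (P l') ^ 2 = a k' - a l' := by
        have h3 : a k' = ‖P k' - P l'‖ ^ 2 + a l' := hpyth hkl
        rw [dist_eq_norm]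
        show ‖P k' - P l'‖ ^ 2 = a k' - a l'
        linarith
      have h2 : a k' - a l' < ε ^ 2 := by
        have := abs_lt.1 (by simpa [Real.dist_eq] using hd)
        linarith [this.2]
      nlinarith [dist_nonneg (x := P k') (y := P l'), h1, h2]
    rcases le_total k l with h | h
    · exact key k l h hk hl
    · rw [dist_comm]; exact key l k h hl hk
  obtain ⟨y, hy⟩ := cauchySeq_tendsto_of_complete hcauchy
  refine ⟨y, hy, ?_, ?_⟩
  · intro k
    have hclosed : IsClosed ((U k : Set E)) :=
      (completeSpace_coe_iff_isComplete.1 (inferInstance : CompleteSpace (U k))).isClosed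
    refine hclosed.mem_of_tendsto hy ?_
    filter_upwards [eventually_ge_atTop k] with l hl
    exact hU hl (SetLike.coe_mem _)
  · intro w hw
    have htend : Tendsto (fun l => ⟪x - P l, w⟫) atTop (nhds ⟪x - y, w⟫) :=
      (tendsto_const_nhds.sub hy).inner tendsto_const_nhds
    have hzero : ∀ l, ⟪x - P l, w⟫ = 0 := fun l =>
      Submodule.starProjection_inner_eq_zero x w (hw l)
    have : Tendsto (fun _ : ℕ => (0 : ℝ)) atTop (nhds ⟪x - y, w⟫) := by
      simpa [hzero] using htend
    exact tendsto_nhds_unique this tendsto_const_nhds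

/-- Hard direction. -/
lemma exists_symmDiff_null {Ω : Type*} (F : ℕ → MeasurableSpace Ω) (G : MeasurableSpace Ω)
    {m : MeasurableSpace Ω} {μ : Measure Ω} [IsProbabilityMeasure μ]
    (hdec : Antitone F) (hFm : ∀ l, F l ≤ m) (hGm : G ≤ m)
    (hindep : Indep (F 0) G μ) {A : Set Ω} (hA : MeasurableSet[⨅ l, (F l ⊔ G)] A) :
    ∃ t, MeasurableSet[(⨅ l, F l) ⊔ G] t ∧ μ (symmDiff A t) = 0 := by
  have hVle : ∀ l, F l ⊔ G ≤ m := fun l => sup_le (hFm l) hGm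
  have hVile : (⨅ l, F l) ⊔ G ≤ m := sup_le (le_trans (iInf_le F 0) (hFm 0)) hGm
  have hVi_le_V : ∀ l, (⨅ l, F l) ⊔ G ≤ F l ⊔ G := fun l => sup_le_sup_right (iInf_le F l) G
  haveI hFact : ∀ l, Fact (F l ≤ m) := fun l => ⟨hFm l⟩
  haveI hFactV : ∀ l, Fact (F l ⊔ G ≤ m) := fun l => ⟨hVle l⟩
  haveI : Fact ((⨅ l, F l) ⊔ G ≤ m) := ⟨hVile⟩
  have hAl : ∀ l, MeasurableSet[F l ⊔ G] A := fun l => (iInf_le (fun l => F l ⊔ G) l) A hA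
  have hAm : MeasurableSet A := hVle 0 A (hAl 0)
  set f : Lp ℝ 2 μ := indicatorConstLp 2 hAm (measure_ne_top μ A) (1 : ℝ) with hfdef
  have hfmem : ∀ l, f ∈ lpMeas ℝ ℝ (F l ⊔ G) 2 μ := fun l =>
    mem_lpMeas_iff_aestronglyMeasurable.2
      ⟨A.indicator fun _ => (1 : ℝ),
        StronglyMeasurable.indicator stronglyMeasurable_const (hAl l), indicatorConstLp_coeFn⟩
  set Pf : Lp ℝ 2 μ :=
    (Submodule.orthogonalProjection (lpMeas ℝ ℝ ((⨅ l, F l) ⊔ G) 2 μ) f : Lp ℝ 2 μ) with hPfdef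
  set g : Lp ℝ 2 μ := f - Pf with hgdef
  have hgmem : ∀ l, g ∈ lpMeas ℝ ℝ (F l ⊔ G) 2 μ := fun l =>
    Submodule.sub_mem _ (hfmem l) (lpMeas_mono (hVi_le_V l) (SetLike.coe_mem _))
  have hgint : Integrable (⇑g) μ := (Lp.memLp g).integrable one_le_two
  have hUanti : Antitone (fun l => lpMeas ℝ ℝ (F l) 2 μ) := fun k l hkl => lpMeas_mono (hdec hkl)
  -- Main rectangle computation
  have hrect : ∀ B C, MeasurableSet[F 0] B → MeasurableSet[G] C →
      ∫ x in B ∩ C, (⇑g) x ∂μ = 0 := by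
    intro B C hB hC
    have hBm : MeasurableSet B := hFm 0 B hB
    have hCm : MeasurableSet C := hGm C hC
    set xB : Lp ℝ 2 μ := indicatorConstLp 2 hBm (measure_ne_top μ B) (1 : ℝ) with hxBdef
    set xBC : Lp ℝ 2 μ :=
      indicatorConstLp 2 (hBm.inter hCm) (measure_ne_top μ (B ∩ C)) (1 : ℝ) with hxBCdef
    obtain ⟨y, hytend, hymem, -⟩ :=
      proj_tendsto (fun l => lpMeas ℝ ℝ (F l) 2 μ) hUanti xB
    have hy' : AEStronglyMeasurable[⨅ l, F l] (⇑y) μ :=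
      aestronglyMeasurable'_iInf hdec
        (fun l => mem_lpMeas_iff_aestronglyMeasurable.1 (hymem l))
    set e : ℕ → Lp ℝ 2 μ :=
      fun l => (Submodule.orthogonalProjection (lpMeas ℝ ℝ (F l) 2 μ) xB : Lp ℝ 2 μ) with hedef
    have hemem : ∀ l, e l ∈ lpMeas ℝ ℝ (F l) 2 μ := fun l => SetLike.coe_mem _
    set z : ℕ → Lp ℝ 2 μ :=
      fun l => MemLp.toLp _ ((Lp.memLp (e l)).indicator hCm) with hzdef
    set zLim : Lp ℝ 2 μ := MemLp.toLp _ ((Lp.memLp y).indicator hCm) with hzidef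
    have hze : ∀ l, ⇑(z l) =ᵐ[μ] C.indicator ⇑(e l) := fun l => MemLp.coeFn_toLp _
    have hzie : ⇑zLim =ᵐ[μ] C.indicator ⇑y := MemLp.coeFn_toLp _
    -- e_l has the condExp set-integral property
    have heint : ∀ l (s : Set Ω), MeasurableSet[F l] s →
        ∫ x in s, (⇑(e l)) x ∂μ = ∫ x in s, (⇑xB) x ∂μ := by
      intro l s hs
      have : (condExpL2 ℝ ℝ (hFm l) xB : Lp ℝ 2 μ) = e l := rfl
      rw [← this]
      exact integral_condExpL2_eq (hFm l) xB hs (measure_ne_top μ s)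
    -- zero set-integrals of θ_l = xBC - z l on F l ⊔ G
    have hθ0 : ∀ l (s : Set Ω), MeasurableSet[F l ⊔ G] s →
        ∫ x in s, (⇑(xBC - z l)) x ∂μ = 0 := by
      intro l
      refine setIntegral_eq_zero_of_rects (hVle l)
        ((Lp.memLp _).integrable one_le_two) ?_
      intro B' C' hB' hC'
      have hB'm : MeasurableSet B' := hFm l B' hB'
      have hC'm : MeasurableSet C' := hGm C' hC'
      have hB'0 : MeasurableSet[F 0] B' := hdec (Nat.zero_le l) B' hB'
      have hint1 : Integrable (⇑xBC) μ := (Lp.memLp xBC).integrable one_le_two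
      have hint2 : Integrable (⇑(z l)) μ := (Lp.memLp (z l)).integrable one_le_two
      have hsplit : ∫ x in B' ∩ C', (⇑(xBC - z l)) x ∂μ =
          (∫ x in B' ∩ C', (⇑xBC) x ∂μ) - ∫ x in B' ∩ C', (⇑(z l)) x ∂μ := by
        rw [← integral_sub hint1.integrableOn hint2.integrableOn]
        refine integral_congr_ae (ae_restrict_of_ae ?_)
        filter_upwards [Lp.coeFn_sub xBC (z l)] with x hx
        simpa using hx
      have hT1 : ∫ x in B' ∩ C', (⇑xBC) x ∂μ =
          (μ (B ∩ B')).toReal * (μ (C ∩ C')).toReal := by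
        calc ∫ x in B' ∩ C', (⇑xBC) x ∂μ
            = ∫ x in B' ∩ C', (B ∩ C).indicator (fun _ => (1 : ℝ)) x ∂μ :=
              integral_congr_ae (ae_restrict_of_ae indicatorConstLp_coeFn)
          _ = ∫ _x in (B' ∩ C') ∩ (B ∩ C), (1 : ℝ) ∂μ := setIntegral_indicator (hBm.inter hCm)
          _ = (μ ((B' ∩ C') ∩ (B ∩ C))).toReal := by
              rw [setIntegral_const, smul_eq_mul, mul_one]; rfl
          _ = (μ ((B ∩ B') ∩ (C ∩ C'))).toReal := by
              rw [show (B' ∩ C') ∩ (B ∩ C) = (B ∩ B') ∩ (C ∩ C') by ext x; simp; tauto]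
          _ = (μ (B ∩ B') * μ (C ∩ C')).toReal := by
              rw [(Indep_iff _ _ _).1 hindep _ _ (hB.inter hB'0) (hC.inter hC')]
          _ = _ := ENNReal.toReal_mul
      have heae : AEStronglyMeasurable[F 0] (B'.indicator ⇑(e l)) μ := by
        obtain ⟨v, hv, hev⟩ :=
          (mem_lpMeas_iff_aestronglyMeasurable.1 (hemem l)).mono (hdec (Nat.zero_le l))
        refine ⟨B'.indicator v, hv.indicator hB'0, ?_⟩
        filter_upwards [hev] with ω hω
        by_cases hx : ω ∈ B' <;> simp [hx, hω]
      have hT2 : ∫ x in B' ∩ C', (⇑(z l)) x ∂μ =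
          (μ (C' ∩ C)).toReal * (μ (B' ∩ B)).toReal := by
        have h1 : ∫ x in B' ∩ C', (⇑(z l)) x ∂μ = ∫ x in B' ∩ C', C.indicator (⇑(e l)) x ∂μ :=
          integral_congr_ae (ae_restrict_of_ae (hze l))
        have h2 : ∫ x in B' ∩ C', C.indicator (⇑(e l)) x ∂μ =
            ∫ x in C' ∩ C, B'.indicator (⇑(e l)) x ∂μ := by
          rw [setIntegral_indicator hCm,
            show (B' ∩ C') ∩ C = (C' ∩ C) ∩ B' by ext x; simp; tauto,
            ← setIntegral_indicator hB'm]
        have h3 : ∫ x in C' ∩ C, B'.indicator (⇑(e l)) x ∂μ =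
            (μ (C' ∩ C)).toReal • ∫ x, B'.indicator (⇑(e l)) x ∂μ :=
          setIntegral_eq_smul_of_indep (hFm 0) hGm hindep heae
            (((Lp.memLp (e l)).integrable one_le_two).indicator hB'm) (hC'.inter hC)
        have h4 : ∫ x, B'.indicator (⇑(e l)) x ∂μ = (μ (B' ∩ B)).toReal := by
          rw [integral_indicator hB'm, heint l B' hB']
          calc ∫ x in B', (⇑xB) x ∂μ
              = ∫ x in B', B.indicator (fun _ => (1 : ℝ)) x ∂μ :=
                integral_congr_ae (ae_restrict_of_ae indicatorConstLp_coeFn)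
            _ = ∫ _x in B' ∩ B, (1 : ℝ) ∂μ := setIntegral_indicator hBm
            _ = (μ (B' ∩ B)).toReal := by rw [setIntegral_const, smul_eq_mul, mul_one]; rfl
        rw [h1, h2, h3, h4, smul_eq_mul]
      rw [hsplit, hT1, hT2, Set.inter_comm C' C, Set.inter_comm B' B]
      ring
    -- inner products against g
    have hginner : ∀ l : ℕ, (inner ℝ g xBC : ℝ) = inner ℝ g (z l) := by
      intro l
      have hPθ : (Submodule.orthogonalProjection (lpMeas ℝ ℝ (F l ⊔ G) 2 μ) (xBC - z l) : Lp ℝ 2 μ) = 0 := by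
        rw [Lp.eq_zero_iff_ae_eq_zero]
        have hrfl : (condExpL2 ℝ ℝ (hVle l) (xBC - z l) : Lp ℝ 2 μ) =
            (Submodule.orthogonalProjection (lpMeas ℝ ℝ (F l ⊔ G) 2 μ) (xBC - z l) : Lp ℝ 2 μ) := rfl
        rw [← hrfl]
        refine lpMeas.ae_eq_zero_of_forall_setIntegral_eq_zero (hVle l)
          (condExpL2 ℝ ℝ (hVle l) (xBC - z l)) two_ne_zero ENNReal.ofNat_ne_top
          (fun s _ _ => ((Lp.memLp _).integrable one_le_two).integrableOn) ?_
        intro s hs _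
        rw [integral_condExpL2_eq (hVle l) _ hs (measure_ne_top μ s)]
        exact hθ0 l s hs
      have hgself : (Submodule.orthogonalProjection (lpMeas ℝ ℝ (F l ⊔ G) 2 μ) g : Lp ℝ 2 μ) = g :=
        Submodule.starProjection_eq_self_iff.2 (hgmem l)
      have hzero : (inner ℝ g (xBC - z l) : ℝ) = 0 := by
        conv_lhs => rw [← hgself]
        rw [show (Submodule.orthogonalProjection (lpMeas ℝ ℝ (F l ⊔ G) 2 μ) g : Lp ℝ 2 μ) = (lpMeas ℝ ℝ (F l ⊔ G) 2 μ).starProjection g from rfl, Submodule.inner_starProjection_left_eq_right, show (lpMeas ℝ ℝ (F l ⊔ G) 2 μ).starProjection (xBC - z l) = (Submodule.orthogonalProjection (lpMeas ℝ ℝ (F l ⊔ G) 2 μ) (xBC - z l) : Lp ℝ 2 μ) from rfl, hPθ, inner_zero_right]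
      have h2 : (inner ℝ g (xBC - z l) : ℝ) = inner ℝ g xBC - inner ℝ g (z l) := inner_sub_right g xBC (z l)
      rw [hzero] at h2
      linarith
    -- limit of z l
    have htendz : Tendsto z atTop (nhds zLim) := by
      rw [tendsto_iff_norm_sub_tendsto_zero]
      have hb : ∀ l, ‖z l - zLim‖ ≤ ‖e l - y‖ := by
        intro l
        rw [Lp.norm_def, Lp.norm_def]
        refine ENNReal.toReal_mono (Lp.eLpNorm_ne_top _) ?_
        calc eLpNorm (⇑(z l - zLim)) 2 μ
            = eLpNorm (C.indicator (⇑(e l) - ⇑y)) 2 μ := by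
              refine eLpNorm_congr_ae ?_
              filter_upwards [Lp.coeFn_sub (z l) zLim, hze l, hzie] with x h1 h2 h3
              simp only [h1, Pi.sub_apply, h2, h3, Set.indicator_apply]
              by_cases hx : x ∈ C <;> simp [hx]
          _ ≤ eLpNorm (⇑(e l) - ⇑y) 2 μ := eLpNorm_indicator_le _
          _ = eLpNorm (⇑(e l - y)) 2 μ := (eLpNorm_congr_ae (Lp.coeFn_sub (e l) y)).symm
      have h0 : Tendsto (fun l => ‖e l - y‖) atTop (nhds 0) :=
        tendsto_iff_norm_sub_tendsto_zero.1 hytend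
      exact squeeze_zero (fun l => norm_nonneg _) hb h0
    -- zLim lies in the infimum space
    have hzimem : zLim ∈ lpMeas ℝ ℝ ((⨅ l, F l) ⊔ G) 2 μ := by
      obtain ⟨y₀, hy₀m, hyy₀⟩ := hy'
      refine mem_lpMeas_iff_aestronglyMeasurable.2
        ⟨C.indicator y₀, (hy₀m.mono le_sup_left).indicator
          ((le_sup_right : G ≤ (⨅ l, F l) ⊔ G) C hC), ?_⟩
      filter_upwards [hzie, hyy₀] with x h1 h2
      rw [h1]
      by_cases hx : x ∈ C <;> simp [hx, h2]
    have hgzi : (inner ℝ g zLim : ℝ) = 0 := by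
      rw [hgdef, hPfdef]
      exact Submodule.starProjection_inner_eq_zero f zLim hzimem
    have hconst : (inner ℝ g xBC : ℝ) = 0 := by
      have ht : Tendsto (fun l => (inner ℝ g (z l) : ℝ)) atTop (nhds (inner ℝ g zLim)) :=
        tendsto_const_nhds.inner htendz
      have ht2 : Tendsto (fun _ : ℕ => (inner ℝ g xBC : ℝ)) atTop (nhds (inner ℝ g zLim)) := by
        simpa [← hginner] using ht
      exact (tendsto_nhds_unique ht2 tendsto_const_nhds).symm.trans hgzi
    have hfin := L2.inner_indicatorConstLp_eq_setIntegral_inner ℝ g (hBm.inter hCm) (1 : ℝ)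
      (measure_ne_top μ (B ∩ C))
    rw [real_inner_comm] at hconst
    rw [hxBCdef] at hconst
    rw [hfin] at hconst
    simpa [RCLike.inner_apply] using hconst
  -- extend to F 0 ⊔ G and conclude g = 0
  have hset : ∀ s, MeasurableSet[F 0 ⊔ G] s → ∫ x in s, (⇑g) x ∂μ = 0 :=
    setIntegral_eq_zero_of_rects (sup_le (hFm 0) hGm) hgint hrect
  have hg0 : ⇑g =ᵐ[μ] 0 := by
    have := lpMeas.ae_eq_zero_of_forall_setIntegral_eq_zero (sup_le (hFm 0) hGm)
      (⟨g, hgmem 0⟩ : lpMeas ℝ ℝ (F 0 ⊔ G) 2 μ) two_ne_zero ENNReal.ofNat_ne_top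
      (fun s _ _ => hgint.integrableOn) (fun s hs _ => hset s hs)
    exact this
  obtain ⟨h₀, hh₀m, hPh₀⟩ := mem_lpMeas_iff_aestronglyMeasurable.1
    (SetLike.coe_mem (Submodule.orthogonalProjection (lpMeas ℝ ℝ ((⨅ l, F l) ⊔ G) 2 μ) f))
  have hind : A.indicator (fun _ => (1 : ℝ)) =ᵐ[μ] h₀ := by
    have hfP : ⇑f =ᵐ[μ] h₀ := by
      filter_upwards [hg0, Lp.coeFn_sub f Pf, hPh₀] with x h1 h2 h3
      have h4 : (⇑f - ⇑Pf) x = 0 := by rw [← h2]; exact h1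
      have h5 : ⇑f x = ⇑Pf x := by
        have := sub_eq_zero.1 h4
        simpa using this
      rw [h5]
      exact h3
    exact indicatorConstLp_coeFn.symm.trans hfP
  refine ⟨h₀ ⁻¹' Set.Ioi (1 / 2 : ℝ), hh₀m.measurable measurableSet_Ioi, ?_⟩
  refine measure_mono_null ?_ (ae_iff.1 hind)
  intro ω hω
  simp only [Set.mem_symmDiff] at hω
  simp only [Set.mem_setOf_eq]
  intro heq
  rcases hω with ⟨hA', hnt⟩ | ⟨ht, hnA⟩
  · apply hnt
    have h1 : A.indicator (fun _ => (1 : ℝ)) ω = 1 := Set.indicator_of_mem hA' _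
    have h2 : h₀ ω = 1 := by rw [← heq, h1]
    simp only [Set.mem_preimage, Set.mem_Ioi, h2]
    norm_num
  · have h1 : A.indicator (fun _ => (1 : ℝ)) ω = 0 := Set.indicator_of_notMem hnA _
    have h2 : h₀ ω = 0 := by rw [← heq, h1]
    have h3 : (1 / 2 : ℝ) < h₀ ω := ht
    norm_num [h2] at h3

end EqModNullAux
end
end Aux

/-- If `(F l)` is a decreasing sequence of sub-σ-fields (`F l` stands for `F_{-l}`) and
`F 0` is independent of `G`, then `⋂ l (F l ∨ G) = (⋂ l F l) ∨ G` up to null sets. -/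
theorem iInf_join_eq_join_iInf_of_indep
    {Ω : Type*} {m : MeasurableSpace Ω} {μ : Measure Ω} [IsProbabilityMeasure μ]
    (F : ℕ → MeasurableSpace Ω) (hdec : Antitone F) (hFm : ∀ l, F l ≤ m)
    (G : MeasurableSpace Ω) (hGm : G ≤ m)
    (hindep : Indep (F 0) G μ) :
    EqModNull μ (⨅ l, (F l ⊔ G)) ((⨅ l, F l) ⊔ G) := by
  constructor
  · intro s hs
    exact EqModNullAux.exists_symmDiff_null F G hdec hFm hGm hindep hs
  · intro s hs
    refine ⟨s, (le_iInf fun l => sup_le_sup_right (iInf_le F l) G) s hs, ?_⟩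
    simp [symmDiff_self]
end

section
/- Let G be a compact metrizable topological group and H, K compact subgroups. If g_n H → gH in G/H and g_n K → gK in G/K, then g_n (H ∩ K) → g(H ∩ K) in G/(H ∩ K). -/
open Filter

/-- The quotient of a Hausdorff group by a compact subgroup is Hausdorff. -/
theorem t2Space_quotient_of_isCompact
    {G : Type*} [Group G] [TopologicalSpace G] [IsTopologicalGroup G] [T2Space G]
    (H : Subgroup G) (hHc : IsCompact (H : Set G)) : T2Space (G ⧸ H) := by
  rw [t2_iff_isClosed_diagonal]
  have hq : IsOpenQuotientMap
      (Prod.map (QuotientGroup.mk : G → G ⧸ H) (QuotientGroup.mk : G → G ⧸ H)) :=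
    QuotientGroup.isOpenQuotientMap_mk.prodMap QuotientGroup.isOpenQuotientMap_mk
  rw [← hq.isQuotientMap.isClosed_preimage]
  have : (Prod.map (QuotientGroup.mk : G → G ⧸ H) QuotientGroup.mk) ⁻¹'
      Set.diagonal (G ⧸ H) = {p : G × G | p.1⁻¹ * p.2 ∈ H} := by
    ext p
    simp only [Set.mem_preimage, Set.mem_diagonal_iff, Prod.map_fst, Prod.map_snd,
      Set.mem_setOf_eq, Prod.map_apply]
    exact QuotientGroup.eq
  rw [this]
  exact hHc.isClosed.preimage (by continuity)

/-- If `gₙH → gH` in `G/H` and `gₙK → gK` in `G/K`, then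
`gₙ(H ∩ K) → g(H ∩ K)` in `G/(H ∩ K)`, for compact subgroups `H`, `K`
of a compact metrizable group `G`. -/
theorem tendsto_quotient_mk_inf
    {G : Type*} [Group G] [TopologicalSpace G] [IsTopologicalGroup G]
    [CompactSpace G] [TopologicalSpace.MetrizableSpace G]
    (H K : Subgroup G)
    (hHc : IsCompact (H : Set G)) (hKc : IsCompact (K : Set G))
    (g : ℕ → G) (g₀ : G)
    (hH : Tendsto (fun n => (QuotientGroup.mk (g n) : G ⧸ H)) atTop
      (nhds (QuotientGroup.mk g₀ : G ⧸ H)))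
    (hK : Tendsto (fun n => (QuotientGroup.mk (g n) : G ⧸ K)) atTop
      (nhds (QuotientGroup.mk g₀ : G ⧸ K))) :
    Tendsto (fun n => (QuotientGroup.mk (g n) : G ⧸ (H ⊓ K))) atTop
      (nhds (QuotientGroup.mk g₀ : G ⧸ (H ⊓ K))) := by
  haveI : T2Space (G ⧸ H) := t2Space_quotient_of_isCompact H hHc
  haveI : T2Space (G ⧸ K) := t2Space_quotient_of_isCompact K hKc
  apply tendsto_of_subseq_tendsto
  intro ns hns
  -- extract a convergent sub-subsequence of `g ∘ ns` in the compact space `G`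
  obtain ⟨x, -, φ, hφ, hx⟩ :=
    isCompact_univ.tendsto_subseq (x := fun n => g (ns n)) (fun n => Set.mem_univ _)
  refine ⟨φ, ?_⟩
  have hmkH : Tendsto (fun n => (QuotientGroup.mk (g (ns (φ n))) : G ⧸ H)) atTop
      (nhds (QuotientGroup.mk x)) := (QuotientGroup.continuous_mk.tendsto x).comp hx
  have hmkK : Tendsto (fun n => (QuotientGroup.mk (g (ns (φ n))) : G ⧸ K)) atTop
      (nhds (QuotientGroup.mk x)) := (QuotientGroup.continuous_mk.tendsto x).comp hx
  have hns' : Tendsto (fun n => ns (φ n)) atTop atTop := hns.comp hφ.tendsto_atTop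
  have h1 : (QuotientGroup.mk x : G ⧸ H) = QuotientGroup.mk g₀ :=
    tendsto_nhds_unique hmkH (hH.comp hns')
  have h2 : (QuotientGroup.mk x : G ⧸ K) = QuotientGroup.mk g₀ :=
    tendsto_nhds_unique hmkK (hK.comp hns')
  have hmem : x⁻¹ * g₀ ∈ H ⊓ K :=
    ⟨QuotientGroup.eq.mp h1, QuotientGroup.eq.mp h2⟩
  have h3 : (QuotientGroup.mk x : G ⧸ (H ⊓ K)) = QuotientGroup.mk g₀ :=
    QuotientGroup.eq.mpr hmem
  have hfin : Tendsto (fun n => (QuotientGroup.mk (g (ns (φ n))) : G ⧸ (H ⊓ K))) atTop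
      (nhds (QuotientGroup.mk x)) := (QuotientGroup.continuous_mk.tendsto x).comp hx
  rwa [h3] at hfin
end

section
/- Let G be a compact group, (ξ_k)_{k ∈ -ℕ} independent G-valued random variables with ξ_k ~ μ_k, and let η_k* be, for each k, a G-valued random variable uniform on G (law equal to normalized Haar measure) independent of (ξ_m)_{m ≤ k}, with η_k* = ξ_k η_{k-1}*. Then each η_k* is independent of the entire noise process (ξ_m)_{m ∈ -ℕ}. -/
open MeasureTheory ProbabilityTheory Pointwise

/-- The σ-field generated by the variables `f m` for `m ≥ k`; since the index `m : ℕ`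
encodes the time `-m ∈ -ℕ`, this is the past `σ(f_t : t ≤ -k)`. -/
def pastSigma {G Ω : Type*} [MeasurableSpace G] (f : ℕ → Ω → G) (k : ℕ) :
    MeasurableSpace Ω :=
  ⨆ m, ⨆ _ : k ≤ m, MeasurableSpace.comap (f m) inferInstance

/-- The ordered product `ξ 0 * ξ 1 * ⋯ * ξ (n-1)` of the noise variables. -/
def noiseProd {Ω G : Type*} [Monoid G] (ξ : ℕ → Ω → G) : ℕ → Ω → G
  | 0 => fun _ => 1
  | (n + 1) => fun x => noiseProd ξ n x * ξ n x

/-- Discretization of the noise product: for every neighborhood `V` of `1` there is a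
countable measurable partition of `Ω` (measurable w.r.t. the noise σ-algebra) on each
piece of which the noise product `noiseProd ξ n` is within `V` of a constant. -/
lemma exists_discretization {G Ω : Type*} [Group G] [TopologicalSpace G] [IsTopologicalGroup G]
    [CompactSpace G] [MeasurableSpace G] [BorelSpace G] (ξ : ℕ → Ω → G) :
    ∀ (n : ℕ) (V : Set G), IsOpen V → (1 : G) ∈ V →
      ∃ (ι : Type) (_ : Countable ι) (c : ι → G) (T : ι → Set Ω),
        (∀ i, MeasurableSet[⨆ m, MeasurableSpace.comap (ξ m) inferInstance] (T i)) ∧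
        Pairwise (Function.onFun Disjoint T) ∧ (⋃ i, T i) = Set.univ ∧
        ∀ i, ∀ x ∈ T i, (c i)⁻¹ * noiseProd ξ n x ∈ V := by
  intro n
  induction n with
  | zero =>
    intro V hVo hV1
    refine ⟨PUnit, inferInstance, fun _ => 1, fun _ => Set.univ,
      fun _ => MeasurableSet.univ, fun i j hij => absurd (Subsingleton.elim i j) hij,
      Set.iUnion_const _, fun i x _ => ?_⟩
    simpa [noiseProd] using hV1
  | succ n ih =>
    intro V hVo hV1
    obtain ⟨V₁, hV₁o, hV₁1, hV₁V⟩ := exists_open_nhds_one_mul_subset (hVo.mem_nhds hV1)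
    obtain ⟨t, ht⟩ := isCompact_univ.elim_finite_subcover (fun g : G => g • V₁)
      (fun g => hV₁o.smul g)
      (fun y _ => Set.mem_iUnion.2 ⟨y, Set.mem_smul_set_iff_inv_smul_mem.2
        (by simpa [smul_eq_mul] using hV₁1)⟩)
    classical
    let e := t.equivFin
    set gf : ℕ → G := fun j => if h : j < t.card then ((e.symm ⟨j, h⟩ : t) : G) else 1 with hgf
    have hgf_mem : ∀ j, gf j ∈ t ∨ gf j = 1 := by
      intro j
      by_cases h : j < t.card
      · left; simp only [hgf, dif_pos h]; exact (e.symm ⟨j, h⟩).2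
      · right; simp only [hgf, dif_neg h]
    set V₂ : Set G := V₁ ∩ ⋂ g ∈ t, (fun h => g⁻¹ * h * g) ⁻¹' V₁ with hV₂
    have hV₂o : IsOpen V₂ := by
      refine hV₁o.inter (isOpen_biInter_finset fun g _ => hV₁o.preimage ?_)
      exact (continuous_mul_left g⁻¹).mul continuous_const
    have hV₂1 : (1 : G) ∈ V₂ := by
      refine ⟨hV₁1, Set.mem_iInter₂.2 fun g _ => ?_⟩
      simpa using hV₁1
    have hconj : ∀ j, ∀ h ∈ V₂, (gf j)⁻¹ * h * gf j ∈ V₁ := by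
      intro j h hh
      rcases hgf_mem j with hj | hj
      · exact Set.mem_iInter₂.1 hh.2 (gf j) hj
      · rw [hj]; simpa using hh.1
    obtain ⟨ι, hcnt, c, T, hTm, hTd, hTu, hTc⟩ := ih V₂ hV₂o hV₂1
    haveI : Countable ι := hcnt
    set u : ℕ → Set G := fun j => gf j • V₁ with hu
    have hucov : ⋃ j, u j = Set.univ := by
      apply Set.eq_univ_of_forall
      intro y
      obtain ⟨g, hgt, hyg⟩ := Set.mem_iUnion₂.1 (ht (Set.mem_univ y))
      refine Set.mem_iUnion.2 ⟨(e ⟨g, hgt⟩ : Fin t.card), ?_⟩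
      have : gf (e ⟨g, hgt⟩ : Fin t.card) = g := by
        simp only [hgf, dif_pos (e ⟨g, hgt⟩).2]
        rw [Fin.eta, Equiv.symm_apply_apply]
      rw [hu]; dsimp only; rw [this]; exact hyg
    set C : ℕ → Set G := disjointed u with hC
    have hCm : ∀ j, MeasurableSet (C j) :=
      MeasurableSet.disjointed fun j => (hV₁o.smul (gf j)).measurableSet
    refine ⟨ι × ℕ, inferInstance, fun p => c p.1 * gf p.2,
      fun p => T p.1 ∩ ξ n ⁻¹' C p.2, ?_, ?_, ?_, ?_⟩
    · intro p
      refine (hTm p.1).inter ?_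
      have hle : MeasurableSpace.comap (ξ n) inferInstance
          ≤ ⨆ m, MeasurableSpace.comap (ξ m) inferInstance :=
        le_iSup (fun m => MeasurableSpace.comap (ξ m) inferInstance) n
      exact hle _ ⟨C p.2, hCm p.2, rfl⟩
    · intro p q hpq
      by_cases h1 : p.1 = q.1
      · have h2 : p.2 ≠ q.2 := fun h2 => hpq (Prod.ext h1 h2)
        exact ((disjoint_disjointed u h2).preimage (ξ n)).mono
          Set.inter_subset_right Set.inter_subset_right
      · exact (hTd h1).mono Set.inter_subset_left Set.inter_subset_left
    · apply Set.eq_univ_of_forall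
      intro x
      obtain ⟨a, ha⟩ := Set.mem_iUnion.1 (hTu ▸ Set.mem_univ x)
      have hx2 : ξ n x ∈ ⋃ j, C j := by
        rw [hC, iUnion_disjointed, hucov]; trivial
      obtain ⟨j, hj⟩ := Set.mem_iUnion.1 hx2
      exact Set.mem_iUnion.2 ⟨(a, j), ha, hj⟩
    · rintro ⟨a, j⟩ x ⟨hxT, hxC⟩
      have he : (c a)⁻¹ * noiseProd ξ n x ∈ V₂ := hTc a x hxT
      have hg : (gf j)⁻¹ * ξ n x ∈ V₁ := by
        have hxu : ξ n x ∈ u j := disjointed_subset u j hxC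
        simpa [smul_eq_mul] using Set.mem_smul_set_iff_inv_smul_mem.1 hxu
      have hgeg : (gf j)⁻¹ * ((c a)⁻¹ * noiseProd ξ n x) * gf j ∈ V₁ := hconj j _ he
      have key : (c a * gf j)⁻¹ * noiseProd ξ (n + 1) x
          = ((gf j)⁻¹ * ((c a)⁻¹ * noiseProd ξ n x) * gf j) * ((gf j)⁻¹ * ξ n x) := by
        simp only [noiseProd]
        group
      show (c a * gf j)⁻¹ * noiseProd ξ (n + 1) x ∈ V
      rw [key]
      exact hV₁V (Set.mul_mem_mul hgeg hg)

/-- If `(ξ_k)` are independent with laws `μ_k`, each `η_k` is uniform on the compact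
group `G` (law = normalized Haar measure `ω`), independent of the past noise
`σ(ξ_m : m ≤ k)`, and `η_k = ξ_k η_{k-1}` a.s., then each `η_k` is independent of the
whole noise process `(ξ_m)_{m ∈ -ℕ}`.  (Index `k : ℕ` encodes time `-k`.) -/
theorem uniform_solution_indep_of_noise
    {G : Type*} [Group G] [TopologicalSpace G] [IsTopologicalGroup G]
    [CompactSpace G] [T2Space G] [MeasurableSpace G] [BorelSpace G]
    (ω : Measure G) [ω.IsHaarMeasure] [IsProbabilityMeasure ω]
    {Ω : Type*} [MeasurableSpace Ω] (P : Measure Ω) [IsProbabilityMeasure P]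
    (η ξ : ℕ → Ω → G) (μk : ℕ → Measure G)
    (hηm : ∀ k, Measurable (η k)) (hξm : ∀ k, Measurable (ξ k))
    (hξindep : iIndepFun ξ P)
    (hξlaw : ∀ k, P.map (ξ k) = μk k)
    (hηlaw : ∀ k, P.map (η k) = ω)
    (hηξ : ∀ k, Indep (MeasurableSpace.comap (η k) inferInstance) (pastSigma ξ k) P)
    (heq : ∀ k, η k =ᵐ[P] fun x => ξ k x * η (k + 1) x) :
    ∀ k, Indep (MeasurableSpace.comap (η k) inferInstance)
      (⨆ m, MeasurableSpace.comap (ξ m) inferInstance) P := by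
  intro k
  have h𝔖le : (⨆ m, MeasurableSpace.comap (ξ m) inferInstance)
      ≤ (inferInstance : MeasurableSpace Ω) := iSup_le fun m => (hξm m).comap_le
  have hmeas𝔖 : ∀ S : Set Ω,
      MeasurableSet[⨆ m, MeasurableSpace.comap (ξ m) inferInstance] S → MeasurableSet S :=
    fun S hS => h𝔖le S hS
  -- independence of η 0 from the full noise σ-algebra, in concrete form
  have hη0S : ∀ A : Set G, MeasurableSet A → ∀ S : Set Ω,
      MeasurableSet[⨆ m, MeasurableSpace.comap (ξ m) inferInstance] S →
      P (η 0 ⁻¹' A ∩ S) = ω A * P S := by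
    have hpast : pastSigma ξ 0 = ⨆ m, MeasurableSpace.comap (ξ m) inferInstance := by
      unfold pastSigma
      exact iSup_congr fun m => iSup_pos (Nat.zero_le m)
    have h := (Indep_iff _ _ _).1 (hηξ 0)
    intro A hA S hS
    have h2 := h (η 0 ⁻¹' A) S ⟨A, hA, rfl⟩ (by rw [hpast]; exact hS)
    rw [h2, ← hηlaw 0, Measure.map_apply (hηm 0) hA]
  -- a.s. product formula
  have hprod : ∀ n, η 0 =ᵐ[P] fun x => noiseProd ξ n x * η n x := by
    intro n
    induction n with
    | zero => filter_upwards with x; simp [noiseProd]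
    | succ n ih =>
      filter_upwards [ih, heq n] with x h1 h2
      rw [h1, h2]
      simp [noiseProd, mul_assoc]
  -- upper bound on closed sets
  have hclosed : ∀ S : Set Ω,
      MeasurableSet[⨆ m, MeasurableSpace.comap (ξ m) inferInstance] S →
      ∀ K : Set G, IsClosed K → P (η k ⁻¹' K ∩ S) ≤ ω K * P S := by
    intro S hS K hK
    refine ENNReal.le_of_forall_pos_le_add fun ε hε _ => ?_
    obtain ⟨U, hKU, hUo, hUlt⟩ := Set.exists_isOpen_lt_of_lt K (ω K + ε)
      (ENNReal.lt_add_right (measure_ne_top ω K) (by exact_mod_cast hε.ne'))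
    obtain ⟨V₀, hV₀n, hV₀K⟩ := compact_open_separated_mul_left hK.isCompact hUo hKU
    obtain ⟨V₁, hV₁sub, hV₁o, hV₁1⟩ := mem_nhds_iff.1 hV₀n
    obtain ⟨ι, hcnt, c, T, hTm, hTd, hTu, hTc⟩ := exists_discretization ξ k V₁ hV₁o hV₁1
    haveI : Countable ι := hcnt
    set A : ι → Set G := fun i => (fun y => (c i)⁻¹ * y) ⁻¹' U with hAdef
    have hAo : ∀ i, IsOpen (A i) := fun i => hUo.preimage (continuous_mul_left _)
    have hsub : η k ⁻¹' K ∩ S ⊆ {x | ¬ η 0 x = noiseProd ξ k x * η k x}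
        ∪ ⋃ i, (η 0 ⁻¹' A i ∩ (S ∩ T i)) := by
      rintro x ⟨hxK, hxS⟩
      by_cases hgood : η 0 x = noiseProd ξ k x * η k x
      · right
        obtain ⟨i, hi⟩ := Set.mem_iUnion.1 (hTu ▸ Set.mem_univ x)
        refine Set.mem_iUnion.2 ⟨i, ?_, hxS, hi⟩
        show (c i)⁻¹ * η 0 x ∈ U
        have h1 : (c i)⁻¹ * noiseProd ξ k x ∈ V₁ := hTc i x hi
        have h2 : (c i)⁻¹ * η 0 x = ((c i)⁻¹ * noiseProd ξ k x) * η k x := by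
          rw [hgood]; group
        rw [h2]
        exact hV₀K (Set.mul_mem_mul (hV₁sub h1) hxK)
      · left; exact hgood
    have hnull : P {x | ¬ η 0 x = noiseProd ξ k x * η k x} = 0 := by
      have := hprod k
      rw [Filter.EventuallyEq, MeasureTheory.ae_iff] at this
      exact this
    calc P (η k ⁻¹' K ∩ S)
        ≤ P {x | ¬ η 0 x = noiseProd ξ k x * η k x}
          + P (⋃ i, (η 0 ⁻¹' A i ∩ (S ∩ T i))) :=
          le_trans (measure_mono hsub) (measure_union_le _ _)
      _ = P (⋃ i, (η 0 ⁻¹' A i ∩ (S ∩ T i))) := by rw [hnull, zero_add]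
      _ ≤ ∑' i, P (η 0 ⁻¹' A i ∩ (S ∩ T i)) := measure_iUnion_le _
      _ = ∑' i, ω (A i) * P (S ∩ T i) :=
          tsum_congr fun i => hη0S (A i) (hAo i).measurableSet _ (hS.inter (hTm i))
      _ = ∑' i, ω U * P (S ∩ T i) := by
          refine tsum_congr fun i => ?_
          rw [hAdef]
          rw [measure_preimage_mul]
      _ = ω U * ∑' i, P (S ∩ T i) := ENNReal.tsum_mul_left
      _ = ω U * P (⋃ i, S ∩ T i) := by
          rw [measure_iUnion
            (fun i j hij => (hTd hij).mono Set.inter_subset_right Set.inter_subset_right)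
            (fun i => (hmeas𝔖 S hS).inter (hmeas𝔖 _ (hTm i)))]
      _ = ω U * P S := by rw [← Set.inter_iUnion, hTu, Set.inter_univ]
      _ ≤ (ω K + ε) * P S := mul_le_mul_left hUlt.le _
      _ = ω K * P S + ε * P S := add_mul _ _ _
      _ ≤ ω K * P S + ε := add_le_add_right
          (le_trans (mul_le_mul_right prob_le_one _) (by rw [mul_one])) _
  -- equality on closed sets, by the complement trick
  have hclosedEq : ∀ S : Set Ω,
      MeasurableSet[⨆ m, MeasurableSpace.comap (ξ m) inferInstance] S →
      ∀ K : Set G, IsClosed K → P (η k ⁻¹' K ∩ S) = ω K * P S := by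
    intro S hS K hK
    have h1 := hclosed S hS K hK
    have h2 := hclosed Sᶜ hS.compl K hK
    have hKm := hK.measurableSet
    have hSm := hmeas𝔖 S hS
    have e1 : P (η k ⁻¹' K ∩ S) + P (η k ⁻¹' K ∩ Sᶜ) = ω K := by
      have h3 := measure_inter_add_diff (μ := P) (η k ⁻¹' K) hSm
      rw [Set.diff_eq] at h3
      rw [h3, ← hηlaw k, Measure.map_apply (hηm k) hKm]
    have e2 : ω K * P S + ω K * P Sᶜ = ω K := by
      rw [← mul_add, prob_add_prob_compl hSm, mul_one]
    by_contra hne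
    have hlt : P (η k ⁻¹' K ∩ S) < ω K * P S := lt_of_le_of_ne h1 hne
    have hcontr : P (η k ⁻¹' K ∩ S) + P (η k ⁻¹' K ∩ Sᶜ) < ω K * P S + ω K * P Sᶜ :=
      lt_of_lt_of_le (ENNReal.add_lt_add_right (measure_ne_top P _) hlt)
        (add_le_add_right h2 _)
    rw [e1, e2] at hcontr
    exact lt_irrefl _ hcontr
  -- equality for all Borel sets, by uniqueness of measures on the closed π-system
  have hallA : ∀ S : Set Ω,
      MeasurableSet[⨆ m, MeasurableSpace.comap (ξ m) inferInstance] S →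
      ∀ A : Set G, MeasurableSet A → P (η k ⁻¹' A ∩ S) = ω A * P S := by
    intro S hS A hA
    have hSm := hmeas𝔖 S hS
    have hμeq : (P.restrict S).map (η k) = P S • ω := by
      haveI : IsFiniteMeasure ((P.restrict S).map (η k)) := by
        constructor
        rw [Measure.map_apply (hηm k) MeasurableSet.univ]
        exact measure_lt_top (P.restrict S) _
      refine ext_of_generate_finite {K : Set G | IsClosed K} ?_ isPiSystem_isClosed ?_ ?_
      · rw [BorelSpace.measurable_eq (α := G), borel_eq_generateFrom_isClosed]
      · intro F hF
        rw [Measure.map_apply (hηm k) hF.measurableSet,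
          Measure.restrict_apply ((hηm k) hF.measurableSet), Measure.smul_apply,
          smul_eq_mul, hclosedEq S hS F hF, mul_comm]
      · rw [Measure.map_apply (hηm k) MeasurableSet.univ, Set.preimage_univ,
          Measure.restrict_apply MeasurableSet.univ, Set.univ_inter, Measure.smul_apply,
          smul_eq_mul, measure_univ, mul_one]
    calc P (η k ⁻¹' A ∩ S) = ((P.restrict S).map (η k)) A := by
          rw [Measure.map_apply (hηm k) hA, Measure.restrict_apply ((hηm k) hA)]
      _ = (P S • ω) A := by rw [hμeq]
      _ = ω A * P S := by rw [Measure.smul_apply, smul_eq_mul, mul_comm]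
  rw [Indep_iff]
  rintro t1 t2 ⟨A, hA, rfl⟩ ht2
  rw [hallA t2 ht2 A hA, ← hηlaw k, Measure.map_apply (hηm k) hA]
end

section
/- Let {(η_k),(ξ_k)} be a solution of η_k = ξ_k η_{k-1} on a compact group G such that the tail σ-field F^η_{-∞} := ⋂_k σ(η_m : m ≤ k) is not trivial. Then the law of (η_k) is not an extremal point of the convex set P_μ of laws of solutions: it can be written as a nontrivial convex combination c P₁ + (1−c) P₂ with P₁, P₂ ∈ P_μ, P₁ ≠ P₂, 0 < c < 1. -/
open MeasureTheory ProbabilityTheory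
open scoped ENNReal

/-- A solution of the stochastic equation `η_k = ξ_k η_{k-1}` (`k ∈ -ℕ`) with noise law
`μ = (μ_k)`: both processes are measurable, the equation holds a.s., each `ξ_k` is
independent of the past `σ(η_m : m ≤ k-1)`, and `ξ_k` has law `μ_k`.
The index `k : ℕ` encodes the time `-k`, so time `k - 1` is encoded by `k + 1`. -/
def IsSolution {G Ω : Type*} [Group G] [MeasurableSpace G] [MeasurableSpace Ω]
    (P : Measure Ω) (μk : ℕ → Measure G) (η ξ : ℕ → Ω → G) : Prop :=
  (∀ k, Measurable (η k)) ∧ (∀ k, Measurable (ξ k)) ∧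
  (∀ k, η k =ᵐ[P] fun x => ξ k x * η (k + 1) x) ∧
  (∀ k, Indep (MeasurableSpace.comap (ξ k) inferInstance) (pastSigma η (k + 1)) P) ∧
  (∀ k, P.map (ξ k) = μk k)

/-- The set `P_μ` of laws on `G^{-ℕ}` of processes `(η_k)` arising from solutions of
`η_k = ξ_k η_{k-1}` with noise law `μ = (μ_k)`. -/
def solutionLaws {G : Type*} [Group G] [MeasurableSpace G] (μk : ℕ → Measure G) :
    Set (Measure (ℕ → G)) :=
  { Q | ∃ (Ω : Type) (_ : MeasurableSpace Ω) (P : Measure Ω) (η ξ : ℕ → Ω → G),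
      IsProbabilityMeasure P ∧ IsSolution P μk η ξ ∧
      Q = P.map (fun x (k : ℕ) => η k x) }

-- conditioning a solution on a tail-measurable event gives a solution
lemma cond_isSolution {G Ω : Type*} [Group G] [MeasurableSpace G] [MeasurableSpace Ω]
    (P : Measure Ω) [IsProbabilityMeasure P] (μk : ℕ → Measure G) (η ξ : ℕ → Ω → G)
    (hsol : IsSolution P μk η ξ) (s : Set Ω) (hsm : MeasurableSet s)
    (hsk : ∀ k, MeasurableSet[pastSigma η k] s) (hs0 : P s ≠ 0) :
    IsSolution (P[|s]) μk η ξ := by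
  obtain ⟨hη, hξ, heq, hind, hlaw⟩ := hsol
  have hcancel : (P s)⁻¹ * P s = 1 := ENNReal.inv_mul_cancel hs0 (measure_ne_top P s)
  refine ⟨hη, hξ, ?_, ?_, ?_⟩
  · intro k
    exact (heq k).filter_mono cond_absolutelyContinuous.ae_le
  · intro k
    rw [Indep_iff]
    intro t1 t2 h1 h2
    have hIk := (Indep_iff _ _ _).mp (hind k)
    have h12 : P (s ∩ (t1 ∩ t2)) = P t1 * P (t2 ∩ s) := by
      rw [show s ∩ (t1 ∩ t2) = t1 ∩ (t2 ∩ s) by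
        ext x; simp only [Set.mem_inter_iff]; tauto]
      exact hIk t1 (t2 ∩ s) h1 (MeasurableSet.inter h2 (hsk (k + 1)))
    have h1s : P (s ∩ t1) = P t1 * P s := by
      rw [Set.inter_comm]; exact hIk t1 s h1 (hsk (k + 1))
    have h1s' : (P s)⁻¹ * P (s ∩ t1) = P t1 := by
      rw [h1s, mul_comm (P t1), ← mul_assoc, hcancel, one_mul]
    calc P[t1 ∩ t2|s] = (P s)⁻¹ * (P t1 * P (t2 ∩ s)) := by rw [cond_apply hsm, h12]
      _ = P t1 * ((P s)⁻¹ * P (s ∩ t2)) := by rw [Set.inter_comm s t2]; ring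
      _ = ((P s)⁻¹ * P (s ∩ t1)) * ((P s)⁻¹ * P (s ∩ t2)) := by rw [h1s']
      _ = P[t1|s] * P[t2|s] := by rw [cond_apply hsm, cond_apply hsm]
  · intro k
    refine Measure.ext fun t ht => ?_
    have hIk := (Indep_iff _ _ _).mp (hind k)
    have hpre : MeasurableSet[MeasurableSpace.comap (ξ k) inferInstance] (ξ k ⁻¹' t) :=
      ⟨t, ht, rfl⟩
    have : P (s ∩ ξ k ⁻¹' t) = P (ξ k ⁻¹' t) * P s := by
      rw [Set.inter_comm]; exact hIk _ s hpre (hsk (k + 1))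
    rw [Measure.map_apply (hξ k) ht, cond_apply hsm, this, mul_comm (P (ξ k ⁻¹' t)),
      ← mul_assoc, hcancel, one_mul, ← Measure.map_apply (hξ k) ht, hlaw k]

lemma measurableSet_eqG {G α : Type*} [TopologicalSpace G] [T2Space G]
    [SecondCountableTopology G] [MeasurableSpace G] [BorelSpace G] [MeasurableSpace α]
    {f g : α → G} (hf : Measurable f) (hg : Measurable g) :
    MeasurableSet {x | f x = g x} := by
  have : {x | f x = g x} = (fun x => (f x, g x)) ⁻¹' (Set.diagonal G) := by
    ext x; simp [Set.diagonal]
  rw [this]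
  exact (hf.prodMk hg) isClosed_diagonal.measurableSet

lemma pastSigma_comap {G Ω Ω' : Type*} [MeasurableSpace G]
    [MeasurableSpace Ω] [MeasurableSpace Ω']
    (η : ℕ → Ω → G) (η' : ℕ → Ω' → G) (φ : Ω → Ω')
    (hc : ∀ k x, η' k (φ x) = η k x) (m : ℕ) :
    MeasurableSpace.comap φ (pastSigma η' m) = pastSigma η m := by
  unfold pastSigma
  simp only [MeasurableSpace.comap_iSup, MeasurableSpace.comap_comp]
  exact iSup_congr fun j => iSup_congr fun _ => by
    rw [show η' j ∘ φ = η j from funext (hc j)]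

lemma isSolution_map {G : Type*} [Group G] [TopologicalSpace G] [IsTopologicalGroup G]
    [T2Space G] [SecondCountableTopology G] [MeasurableSpace G] [BorelSpace G]
    {Ω Ω' : Type*} [MeasurableSpace Ω] [MeasurableSpace Ω']
    (P : Measure Ω) [IsProbabilityMeasure P] (μk : ℕ → Measure G) (η ξ : ℕ → Ω → G)
    (hsol : IsSolution P μk η ξ) (φ : Ω → Ω') (hφ : Measurable φ)
    (η' ξ' : ℕ → Ω' → G) (hη' : ∀ k, Measurable (η' k)) (hξ' : ∀ k, Measurable (ξ' k))
    (hcη : ∀ k x, η' k (φ x) = η k x) (hcξ : ∀ k x, ξ' k (φ x) = ξ k x) :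
    IsSolution (P.map φ) μk η' ξ' := by
  obtain ⟨hη, hξ, heq, hind, hlaw⟩ := hsol
  refine ⟨hη', hξ', ?_, ?_, ?_⟩
  · intro k
    have hS : MeasurableSet {y | η' k y = ξ' k y * η' (k + 1) y} :=
      measurableSet_eqG (hη' k) ((hξ' k).mul (hη' (k + 1)))
    rw [Filter.EventuallyEq, ae_iff]
    have hset : {y | ¬ η' k y = ξ' k y * η' (k + 1) y}
        = {y | η' k y = ξ' k y * η' (k + 1) y}ᶜ := rfl
    rw [hset, Measure.map_apply hφ hS.compl]
    have hpre : φ ⁻¹' {y | η' k y = ξ' k y * η' (k + 1) y}ᶜ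
        = {x | ¬ η k x = ξ k x * η (k + 1) x} := by
      ext x
      simp [hcη, hcξ]
    rw [hpre]
    exact ae_iff.mp (heq k)
  · intro k
    rw [Indep_iff]
    intro t1 t2 h1 h2
    obtain ⟨A, hA, rfl⟩ := h1
    have hIk := (Indep_iff _ _ _).mp (hind k)
    have hp1 : φ ⁻¹' (ξ' k ⁻¹' A) = ξ k ⁻¹' A := by
      ext x; simp [Set.mem_preimage, hcξ]
    have hp2 : MeasurableSet[pastSigma η (k + 1)] (φ ⁻¹' t2) := by
      rw [← pastSigma_comap η η' φ hcη (k + 1)]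
      exact ⟨t2, h2, rfl⟩
    have ht2 : MeasurableSet t2 := (iSup₂_le fun m _ => (hη' m).comap_le) t2 h2
    have ht1 : MeasurableSet (ξ' k ⁻¹' A) := (hξ' k) hA
    rw [Measure.map_apply hφ (ht1.inter ht2), Measure.map_apply hφ ht1,
      Measure.map_apply hφ ht2, Set.preimage_inter, hp1]
    exact hIk _ _ ⟨A, hA, rfl⟩ hp2
  · intro k
    rw [Measure.map_map (hξ' k) hφ, show ξ' k ∘ φ = ξ k from funext (hcξ k), hlaw k]

instance polishOfCompactT2SecondCountable (X : Type*) [TopologicalSpace X] [CompactSpace X]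
    [T2Space X] [SecondCountableTopology X] : PolishSpace X := by
  have h : TopologicalSpace.MetrizableSpace X := inferInstance
  letI := TopologicalSpace.metrizableSpaceMetric X
  exact { toSecondCountableTopology := inferInstance
          complete := ⟨inferInstance, rfl, complete_of_compact⟩ }

/-- If the tail σ-field `F^η_{-∞} = ⋂_k σ(η_m : m ≤ k)` of a solution is not trivial,
then the law of `(η_k)` is not an extremal point of `P_μ`: it is a nontrivial convex
combination `c P₁ + (1-c) P₂` of two distinct laws of solutions. -/
theorem not_extremal_of_tail_not_trivial
    {G : Type*} [Group G] [TopologicalSpace G] [IsTopologicalGroup G]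
    [CompactSpace G] [T2Space G] [SecondCountableTopology G]
    [MeasurableSpace G] [BorelSpace G]
    {Ω : Type*} [MeasurableSpace Ω] (P : Measure Ω) [IsProbabilityMeasure P]
    (μk : ℕ → Measure G) (η ξ : ℕ → Ω → G)
    (hsol : IsSolution P μk η ξ)
    (htail : ∃ s, MeasurableSet[⨅ k, pastSigma η k] s ∧ P s ≠ 0 ∧ P s ≠ 1) :
    ∃ P₁ ∈ solutionLaws μk, ∃ P₂ ∈ solutionLaws μk, ∃ c : ℝ≥0∞,
      0 < c ∧ c < 1 ∧ P₁ ≠ P₂ ∧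
      P.map (fun x (k : ℕ) => η k x) = c • P₁ + (1 - c) • P₂ := by
  obtain ⟨s, hs_tail, hs0, hs1⟩ := htail
  obtain ⟨hη, hξ, heq, hind, hlaw⟩ := id hsol
  have hsk : ∀ k, MeasurableSet[pastSigma η k] s :=
    fun k => (iInf_le (fun k => pastSigma η k) k) s hs_tail
  have hpast_le : ∀ k, pastSigma η k ≤ ‹MeasurableSpace Ω› :=
    fun k => iSup₂_le fun m _ => (hη m).comap_le
  have hsm : MeasurableSet s := hpast_le 0 s (hsk 0)
  have hsc0 : P sᶜ ≠ 0 := by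
    rw [prob_compl_eq_one_sub hsm]
    intro h
    exact hs1 (le_antisymm prob_le_one (by simpa [tsub_eq_zero_iff_le] using h))
  haveI hP1 : IsProbabilityMeasure (P[|s]) := cond_isProbabilityMeasure hs0
  haveI hP2 : IsProbabilityMeasure (P[|sᶜ]) := cond_isProbabilityMeasure hsc0
  have hsol1 := cond_isSolution P μk η ξ hsol s hsm hsk hs0
  have hsol2 := cond_isSolution P μk η ξ hsol sᶜ hsm.compl (fun k => (hsk k).compl) hsc0
  obtain ⟨e, he⟩ := exists_measurableEmbedding_real (ℕ → G × G)
  set jW : Ω → ℕ → G × G := fun x k => (η k x, ξ k x) with hjW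
  have hjWm : Measurable jW := measurable_pi_lambda _ fun k => (hη k).prodMk (hξ k)
  set φ : Ω → ℝ := fun x => e (jW x) with hφdef
  have hφ : Measurable φ := he.measurable.comp hjWm
  choose η' hη'm hη'c using fun k : ℕ =>
    he.exists_measurable_extend ((measurable_pi_apply k).fst) (fun _ => ⟨(1 : G)⟩)
  choose ξ' hξ'm hξ'c using fun k : ℕ =>
    he.exists_measurable_extend ((measurable_pi_apply k).snd) (fun _ => ⟨(1 : G)⟩)
  have hcη : ∀ k x, η' k (φ x) = η k x := fun k x => congrFun (hη'c k) (jW x)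
  have hcξ : ∀ k x, ξ' k (φ x) = ξ k x := fun k x => congrFun (hξ'c k) (jW x)
  set joint : Ω → ℕ → G := fun x k => η k x with hjointdef
  have hjointm : Measurable joint := measurable_pi_lambda _ hη
  set joint' : ℝ → ℕ → G := fun r k => η' k r with hjoint'def
  have hjoint'm : Measurable joint' := measurable_pi_lambda _ hη'm
  have hcomp : joint' ∘ φ = joint := funext fun x => funext fun k => hcη k x
  have hmem : ∀ (ν : Measure Ω), IsProbabilityMeasure ν → IsSolution ν μk η ξ →
      ν.map joint ∈ solutionLaws μk := by
    intro ν hprob hνsol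
    haveI := hprob
    refine ⟨ℝ, inferInstance, ν.map φ, η', ξ', ?_, ?_, ?_⟩
    · exact Measure.isProbabilityMeasure_map hφ.aemeasurable
    · exact isSolution_map ν μk η ξ hνsol φ hφ η' ξ' hη'm hξ'm hcη hcξ
    · rw [Measure.map_map hjoint'm hφ, hcomp]
  refine ⟨(P[|s]).map joint, hmem _ hP1 hsol1, (P[|sᶜ]).map joint, hmem _ hP2 hsol2,
    P s, ?_, ?_, ?_, ?_⟩
  · exact pos_iff_ne_zero.mpr hs0
  · exact lt_of_le_of_ne prob_le_one hs1
  · have hs_in : MeasurableSet[MeasurableSpace.comap joint inferInstance] s := by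
      refine (?_ : pastSigma η 0 ≤ MeasurableSpace.comap joint inferInstance) s (hsk 0)
      refine iSup₂_le fun m _ => ?_
      have h1 : MeasurableSpace.comap joint
          (MeasurableSpace.comap (fun g : ℕ → G => g m) inferInstance)
          = MeasurableSpace.comap (η m) inferInstance := MeasurableSpace.comap_comp
      rw [← h1]
      exact MeasurableSpace.comap_mono (measurable_pi_apply m).comap_le
    obtain ⟨B, hB, hBpre⟩ := MeasurableSpace.measurableSet_comap.mp hs_in
    intro hPP
    have h1 : ((P[|s]).map joint) B = 1 := by
      rw [Measure.map_apply hjointm hB, hBpre, cond_apply hsm, Set.inter_self]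
      exact ENNReal.inv_mul_cancel hs0 (measure_ne_top _ _)
    have h2 : ((P[|sᶜ]).map joint) B = 0 := by
      rw [Measure.map_apply hjointm hB, hBpre, cond_apply hsm.compl,
        Set.compl_inter_self, measure_empty, mul_zero]
    rw [hPP, h2] at h1
    exact zero_ne_one h1
  · refine Measure.ext fun t ht => ?_
    rw [Measure.map_apply hjointm ht, Measure.add_apply, Measure.smul_apply,
      Measure.smul_apply, smul_eq_mul, smul_eq_mul, Measure.map_apply hjointm ht,
      Measure.map_apply hjointm ht, cond_apply hsm, cond_apply hsm.compl]
    have e1 : P s * ((P s)⁻¹ * P (s ∩ joint ⁻¹' t)) = P (s ∩ joint ⁻¹' t) := by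
      rw [← mul_assoc, ENNReal.mul_inv_cancel hs0 (measure_ne_top _ _), one_mul]
    have e2 : (1 - P s) * ((P sᶜ)⁻¹ * P (sᶜ ∩ joint ⁻¹' t)) = P (sᶜ ∩ joint ⁻¹' t) := by
      rw [← prob_compl_eq_one_sub hsm, ← mul_assoc,
        ENNReal.mul_inv_cancel hsc0 (measure_ne_top _ _), one_mul]
    rw [e1, e2, Set.inter_comm s, Set.inter_comm sᶜ,
      ← measure_inter_add_diff (joint ⁻¹' t) hsm, Set.diff_eq]
end
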